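/- The Gaussian profile T(ξ,ζ,t) = T_b + (1 + 4κξ₀²t)^{-1/2} exp(−(ξ₀ξ)²/(1 + 4κξ₀²t)) · (1 + cos(πζ))/2 for |ζ| < 1 (and T = T_b for |ζ| ≥ 1), with constants T_b, ξ₀, κ > 0, satisfies ∂T/∂t = κ ∂²T/∂ξ² pointwise for every (ξ, ζ, t) with t ≥ 0, i.e., it solves the anisotropic heat equation with parallel conductivity κ along the ξ-direction and zero perpendicular conductivity, since the ζ-dependent factor is time-independent and constant along the ξ-direction. -/

import Mathlib

/-- The flux-surface profile
`T(ξ,ζ,t) = T_b + (1+4κξ₀²t)^{-1/2} exp(-(ξ₀ξ)²/(1+4κξ₀²t)) (1+cos(πζ))/2`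
for `|ζ| < 1` (and `T = T_b` for `|ζ| ≥ 1`) satisfies `∂T/∂t = κ ∂²T/∂ξ²`
pointwise for every `(ξ, ζ, t)` with `t ≥ 0`. -/
theorem flux_surface_solution (Tb ξ₀ κ : ℝ) (hTb : 0 < Tb) (hξ₀ : 0 < ξ₀)
    (hκ : 0 < κ) (T : ℝ → ℝ → ℝ → ℝ)
    (hT : ∀ ξ ζ t : ℝ, T ξ ζ t = Tb + (if |ζ| < 1 then
      (1 + 4 * κ * ξ₀ ^ 2 * t) ^ (-(1:ℝ)/2) *
        Real.exp (-(ξ₀ * ξ) ^ 2 / (1 + 4 * κ * ξ₀ ^ 2 * t)) *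
        ((1 + Real.cos (Real.pi * ζ)) / 2) else 0)) :
    ∀ ξ ζ t : ℝ, 0 ≤ t →
      deriv (fun s => T ξ ζ s) t = κ * deriv (deriv (fun y => T y ζ t)) ξ := by
  intro ξ ζ t ht
  set a : ℝ := 4 * κ * ξ₀ ^ 2 with ha
  have ha0 : 0 < a := by positivity
  have hu : 0 < 1 + a * t := by nlinarith
  set C : ℝ := (if |ζ| < 1 then (1 + Real.cos (Real.pi * ζ)) / 2 else 0) with hC
  have hT' : ∀ x s : ℝ, T x ζ s =
      Tb + (1 + a * s) ^ (-(1:ℝ)/2) * Real.exp (-(ξ₀ * x) ^ 2 / (1 + a * s)) * C := by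
    intro x s
    rw [hT]
    by_cases h : |ζ| < 1 <;> simp [hC, h]
  set u : ℝ := 1 + a * t with hu'
  set E : ℝ := Real.exp (-(ξ₀ * ξ) ^ 2 / u) with hE
  -- time derivative
  have h1 : HasDerivAt (fun s : ℝ => 1 + a * s) a t := by
    simpa [Pi.add_def] using (hasDerivAt_const t (1:ℝ)).add ((hasDerivAt_id t).const_mul a)
  have h2 : HasDerivAt (fun s : ℝ => (1 + a * s) ^ (-(1:ℝ)/2))
      (a * (-(1:ℝ)/2) * u ^ (-(1:ℝ)/2 - 1)) t := h1.rpow_const (Or.inl hu.ne')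
  have h3 : HasDerivAt (fun s : ℝ => -(ξ₀ * ξ) ^ 2 / (1 + a * s))
      (-(ξ₀ * ξ) ^ 2 * (-a / u ^ 2)) t := by
    simpa [div_eq_mul_inv] using (h1.inv hu.ne').const_mul (-(ξ₀ * ξ) ^ 2)
  have hgt : HasDerivAt (fun s : ℝ => (1 + a * s) ^ (-(1:ℝ)/2) *
      Real.exp (-(ξ₀ * ξ) ^ 2 / (1 + a * s)))
      (a * (-(1:ℝ)/2) * u ^ (-(1:ℝ)/2 - 1) * E +
        u ^ (-(1:ℝ)/2) * (E * (-(ξ₀ * ξ) ^ 2 * (-a / u ^ 2)))) t := h2.mul h3.exp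
  have hLHS : deriv (fun s => T ξ ζ s) t =
      (a * (-(1:ℝ)/2) * u ^ (-(1:ℝ)/2 - 1) * E +
        u ^ (-(1:ℝ)/2) * (E * (-(ξ₀ * ξ) ^ 2 * (-a / u ^ 2)))) * C := by
    have : deriv (fun s => Tb + (1 + a * s) ^ (-(1:ℝ)/2) *
        Real.exp (-(ξ₀ * ξ) ^ 2 / (1 + a * s)) * C) t = _ :=
      ((hasDerivAt_const t Tb).add (hgt.mul_const C)).deriv
    simpa [hT'] using this
  -- spatial first derivative
  have hinner : ∀ y : ℝ, HasDerivAt (fun x : ℝ => -(ξ₀ * x) ^ 2 / u)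
      (-(2 * (ξ₀ * y) * ξ₀) / u) y := by
    intro y
    have h4 : HasDerivAt (fun x : ℝ => -(ξ₀ * x) ^ 2) (-(2 * (ξ₀ * y) * ξ₀)) y := by
      have := (((hasDerivAt_id y).const_mul ξ₀).pow 2).neg
      simpa [Pi.neg_def, Pi.pow_def, mul_comm, mul_assoc, mul_left_comm] using this
    exact h4.div_const u
  have hgx : ∀ y : ℝ, HasDerivAt (fun x : ℝ => Tb + u ^ (-(1:ℝ)/2) *
      Real.exp (-(ξ₀ * x) ^ 2 / u) * C)
      (u ^ (-(1:ℝ)/2) * (Real.exp (-(ξ₀ * y) ^ 2 / u) * (-(2 * (ξ₀ * y) * ξ₀) / u)) * C) y := by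
    intro y
    simpa [Pi.add_def] using (hasDerivAt_const y Tb).add ((((hinner y).exp).const_mul
      (u ^ (-(1:ℝ)/2))).mul_const C)
  have hD1 : deriv (fun y => T y ζ t) = fun y =>
      u ^ (-(1:ℝ)/2) * (Real.exp (-(ξ₀ * y) ^ 2 / u) * (-(2 * (ξ₀ * y) * ξ₀) / u)) * C := by
    funext y
    have := (hgx y).deriv
    simp only [hT'] at this ⊢
    simpa [hu'] using this
  -- second spatial derivative
  have hlin : HasDerivAt (fun y : ℝ => -(2 * (ξ₀ * y) * ξ₀) / u) (-(2 * ξ₀ * ξ₀) / u) ξ := by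
    have h := (hasDerivAt_id ξ).const_mul (-(2 * ξ₀ * ξ₀) / u)
    have heq : (fun y : ℝ => -(2 * (ξ₀ * y) * ξ₀) / u) =
        fun y => (-(2 * ξ₀ * ξ₀) / u) * y := by funext y; ring
    rw [heq]; simpa using h
  have hexp : HasDerivAt (fun y : ℝ => Real.exp (-(ξ₀ * y) ^ 2 / u))
      (E * (-(2 * (ξ₀ * ξ) * ξ₀) / u)) ξ := (hinner ξ).exp
  have hgxx : HasDerivAt (fun y : ℝ => u ^ (-(1:ℝ)/2) *
      (Real.exp (-(ξ₀ * y) ^ 2 / u) * (-(2 * (ξ₀ * y) * ξ₀) / u)) * C)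
      (u ^ (-(1:ℝ)/2) * (E * (-(2 * (ξ₀ * ξ) * ξ₀) / u) * (-(2 * (ξ₀ * ξ) * ξ₀) / u) +
        E * (-(2 * ξ₀ * ξ₀) / u)) * C) ξ :=
    ((hexp.mul hlin).const_mul (u ^ (-(1:ℝ)/2))).mul_const C
  have hRHS : deriv (deriv (fun y => T y ζ t)) ξ =
      u ^ (-(1:ℝ)/2) * (E * (-(2 * (ξ₀ * ξ) * ξ₀) / u) * (-(2 * (ξ₀ * ξ) * ξ₀) / u) +
        E * (-(2 * ξ₀ * ξ₀) / u)) * C := by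
    rw [hD1]
    exact hgxx.deriv
  rw [hLHS, hRHS]
  have hpow : u ^ (-(1:ℝ)/2 - 1) = u ^ (-(1:ℝ)/2) / u := by
    rw [Real.rpow_sub hu, Real.rpow_one]
  rw [hpow, ha]
  field_simp
  ring
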